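/- Pareto characterization of maximum allocations (essence of Lemma 1): a feasible allocation π satisfies Z(π) = Z_max if and only if there is no feasible allocation π' with ω(π) k ≤ ω(π') k for every company k and ω(π) ≠ ω(π'). -/

import Mathlib

/-- A feasible allocation: every assigned triple was bid on, every job is
assigned at most once, and capacities are respected. -/
def Feasible {J T K : Type*} [DecidableEq J] [DecidableEq T] [DecidableEq K]
    (b : J → T → K → Prop) (n : K → T → ℕ) (π : Finset (J × T × K)) : Prop :=
  (∀ x ∈ π, b x.1 x.2.1 x.2.2) ∧
  (∀ j : J, (π.filter (fun x => x.1 = j)).card ≤ 1) ∧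
  (∀ (k : K) (t : T), (π.filter (fun x => x.2.1 = t ∧ x.2.2 = k)).card ≤ n k t)

/-- Number of jobs a company `k` receives in allocation `π`. -/
def alloc {J T K : Type*} [DecidableEq K]
    (π : Finset (J × T × K)) (k : K) : ℕ :=
  (π.filter (fun x => x.2.2 = k)).card

/-- Total compensation of an allocation. -/
def cost {J T K : Type*} (c : J → T → K → ℕ) (π : Finset (J × T × K)) : ℕ :=
  ∑ x ∈ π, c x.1 x.2.1 x.2.2

/-- The maximum number of allocatable jobs. -/
noncomputable def Zmax {J T K : Type*} [DecidableEq J] [DecidableEq T] [DecidableEq K]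
    (b : J → T → K → Prop) (n : K → T → ℕ) : ℕ :=
  sSup {z | ∃ π : Finset (J × T × K), Feasible b n π ∧ π.card = z}

/-- The allocation vector of `π` sorted in nondecreasing order. -/
def sortedVec {J T K : Type*} [Fintype K] [DecidableEq K]
    (π : Finset (J × T × K)) : List ℕ :=
  Multiset.sort (Finset.univ.val.map (fun k => alloc π k)) (· ≤ ·)

/-- `π` is a max-lexmin fair maximum allocation. -/
noncomputable def MaxLexminFair {J T K : Type*} [Fintype K]
    [DecidableEq J] [DecidableEq T] [DecidableEq K]
    (b : J → T → K → Prop) (n : K → T → ℕ) (π : Finset (J × T × K)) : Prop :=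
  Feasible b n π ∧ π.card = Zmax b n ∧
    ∀ π' : Finset (J × T × K), Feasible b n π' → π'.card = Zmax b n →
      sortedVec π' = sortedVec π ∨ List.Lex (· < ·) (sortedVec π') (sortedVec π)



section Aux

variable {J T K : Type*}
    [Fintype J] [Fintype T] [Fintype K]
    [DecidableEq J] [DecidableEq T] [DecidableEq K]
    (b : J → T → K → Prop) (n : K → T → ℕ)

/-- The empty allocation is feasible. -/
lemma feasible_empty : Feasible b n (∅ : Finset (J × T × K)) := by
  refine ⟨by simp, fun j => by simp, fun k t => by simp⟩

lemma card_le_Zmax {π : Finset (J × T × K)} (h : Feasible b n π) :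
    π.card ≤ Zmax b n := by
  apply le_csSup
  · refine ⟨Fintype.card (J × T × K), ?_⟩
    rintro z ⟨σ, _, rfl⟩
    exact Finset.card_le_card (Finset.subset_univ σ) |>.trans_eq (Finset.card_univ)
  · exact ⟨π, h, rfl⟩

lemma Zmax_mem : ∃ π : Finset (J × T × K), Feasible b n π ∧ π.card = Zmax b n := by
  have h := Nat.sSup_mem (s := {z | ∃ π : Finset (J × T × K), Feasible b n π ∧ π.card = z})
    ⟨0, ∅, feasible_empty b n, by simp⟩
    ⟨Fintype.card (J × T × K), by
      rintro z ⟨σ, _, rfl⟩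
      exact Finset.card_le_card (Finset.subset_univ σ) |>.trans_eq (Finset.card_univ)⟩
  exact h

lemma card_eq_sum_alloc (π : Finset (J × T × K)) :
    π.card = ∑ k : K, alloc π k := by
  exact Finset.card_eq_sum_card_fiberwise (f := fun x : J × T × K => x.2.2)
    (fun x _ => Finset.mem_univ _)

/-- Jobs of a feasible allocation are pairwise distinct. -/
lemma card_image_fst {π : Finset (J × T × K)} (h : Feasible b n π) :
    (π.image Prod.fst).card = π.card := by
  apply Finset.card_image_of_injOn
  intro x hx y hy hxy
  rw [Finset.mem_coe] at hx hy
  have h1 : x ∈ π.filter (fun z => z.1 = x.1) := by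
    simp [Finset.mem_filter, hx]
  have h2 : y ∈ π.filter (fun z => z.1 = x.1) := by
    simp [Finset.mem_filter, hy, hxy]
  exact Finset.card_le_one.mp (h.2.1 x.1) x h1 y h2

/-- The key exchange lemma: if a feasible allocation is not of maximum
cardinality, there is a feasible allocation pointwise dominating it. -/
lemma exchange : ∀ (m : ℕ) (π σ : Finset (J × T × K)),
    (σ \ π).card ≤ m → Feasible b n π → Feasible b n σ → π.card < σ.card →
    ∃ π' : Finset (J × T × K), Feasible b n π' ∧
      (∀ k : K, alloc π k ≤ alloc π' k) ∧ alloc π ≠ alloc π' := by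
  intro m
  induction m with
  | zero =>
    intro π σ hm hπ hσ hcard
    exfalso
    have hsub : σ ⊆ π := by
      intro x hx
      by_contra hxπ
      have : x ∈ σ \ π := Finset.mem_sdiff.mpr ⟨hx, hxπ⟩
      have := Finset.card_pos.mpr ⟨x, this⟩
      omega
    exact absurd (Finset.card_le_card hsub) (by omega)
  | succ m ih =>
    intro π σ hm hπ hσ hcard
    -- find a job assigned in σ but not in π
    have himg : (π.image Prod.fst).card < (σ.image Prod.fst).card := by
      rw [card_image_fst b n hπ, card_image_fst b n hσ]; exact hcard
    obtain ⟨j0, hj0σ, hj0π⟩ : ∃ j0 ∈ σ.image Prod.fst, j0 ∉ π.image Prod.fst := by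
      by_contra hc
      push_neg at hc
      exact absurd (Finset.card_le_card hc) (by omega)
    obtain ⟨x0, hx0σ, rfl⟩ := Finset.mem_image.mp hj0σ
    clear hj0σ
    obtain ⟨j0, t0, k0⟩ := x0
    dsimp only at hj0π
    have hx0π : (j0, t0, k0) ∉ π := fun h =>
      hj0π (Finset.mem_image.mpr ⟨_, h, rfl⟩)
    -- the job j0 appears nowhere in π
    have hjob_empty : π.filter (fun x => x.1 = j0) = ∅ := by
      apply Finset.filter_eq_empty_iff.mpr
      intro x hx hxj
      exact hj0π (Finset.mem_image.mpr ⟨x, hx, hxj⟩)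
    by_cases hslot :
        (π.filter (fun x => x.2.1 = t0 ∧ x.2.2 = k0)).card < n k0 t0
    · -- room at the slot: just add the triple
      refine ⟨insert (j0, t0, k0) π, ⟨?_, ?_, ?_⟩, ?_, ?_⟩
      · intro x hx
        rcases Finset.mem_insert.mp hx with rfl | hx
        · exact hσ.1 _ hx0σ
        · exact hπ.1 _ hx
      · intro j
        rw [Finset.filter_insert]
        by_cases hj : j0 = j
        · subst hj
          simp [hjob_empty]
        · simp only [hj, if_false]
          exact hπ.2.1 j
      · intro k t
        rw [Finset.filter_insert]
        by_cases hkt : t0 = t ∧ k0 = k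
        · obtain ⟨rfl, rfl⟩ := hkt
          simp only [and_self, if_true]
          calc (insert (j0, t0, k0) (π.filter _)).card
              ≤ (π.filter (fun x => x.2.1 = t0 ∧ x.2.2 = k0)).card + 1 :=
                Finset.card_insert_le _ _
            _ ≤ n k0 t0 := by omega
        · have : ¬ ((t0 : T) = t ∧ (k0 : K) = k) := hkt
          simp only [this, if_false]
          exact hπ.2.2 k t
      · intro k
        unfold alloc
        rw [Finset.filter_insert]
        by_cases hk : k0 = k
        · subst hk
          simp only [if_true]
          exact Finset.card_le_card (Finset.subset_insert _ _)
        · simp [hk]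
      · intro hEq
        have := congrFun hEq k0
        unfold alloc at this
        rw [Finset.filter_insert] at this
        simp only [if_true] at this
        have hx0f : (j0, t0, k0) ∉ π.filter (fun x => x.2.2 = k0) := fun h =>
          hx0π (Finset.mem_filter.mp h).1
        rw [Finset.card_insert_of_notMem hx0f] at this
        omega
    · -- slot is full: swap out a triple of π not in σ at this slot
      push_neg at hslot
      have hslot_eq : (π.filter (fun x => x.2.1 = t0 ∧ x.2.2 = k0)).card = n k0 t0 :=
        le_antisymm (hπ.2.2 k0 t0) hslot
      have hx0slot : (j0, t0, k0) ∈ σ.filter (fun x => x.2.1 = t0 ∧ x.2.2 = k0) := by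
        simp [hx0σ]
      obtain ⟨x1, hx1π, hx1σ⟩ :
          ∃ x1 ∈ π.filter (fun x => x.2.1 = t0 ∧ x.2.2 = k0), x1 ∉ σ := by
        by_contra hc
        push_neg at hc
        have hsub : π.filter (fun x => x.2.1 = t0 ∧ x.2.2 = k0) ⊆
            σ.filter (fun x => x.2.1 = t0 ∧ x.2.2 = k0) := by
          intro x hx
          exact Finset.mem_filter.mpr ⟨hc x hx, (Finset.mem_filter.mp hx).2⟩
        have hx0notin : (j0, t0, k0) ∉ π.filter (fun x => x.2.1 = t0 ∧ x.2.2 = k0) :=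
          fun h => hx0π (Finset.mem_filter.mp h).1
        have : (insert (j0, t0, k0) (π.filter (fun x => x.2.1 = t0 ∧ x.2.2 = k0))) ⊆
            σ.filter (fun x => x.2.1 = t0 ∧ x.2.2 = k0) := by
          intro x hx
          rcases Finset.mem_insert.mp hx with rfl | hx
          · exact hx0slot
          · exact hsub hx
        have := Finset.card_le_card this
        rw [Finset.card_insert_of_notMem hx0notin, hslot_eq] at this
        have := hσ.2.2 k0 t0
        omega
      obtain ⟨hx1π, hx1t, hx1k⟩ := Finset.mem_filter.mp hx1π
      set π1 : Finset (J × T × K) := insert (j0, t0, k0) (π.erase x1) with hπ1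
      have hx1ne : x1 ≠ (j0, t0, k0) := fun h => hx0π (h ▸ hx1π)
      have hx0erase : (j0, t0, k0) ∉ π.erase x1 := fun h =>
        hx0π (Finset.mem_of_mem_erase h)
      have hπ1card : π1.card = π.card := by
        rw [hπ1, Finset.card_insert_of_notMem hx0erase,
          Finset.card_erase_of_mem hx1π]
        have : 1 ≤ π.card := Finset.card_pos.mpr ⟨x1, hx1π⟩
        omega
      have hπ1feas : Feasible b n π1 := by
        refine ⟨?_, ?_, ?_⟩
        · intro x hx
          rcases Finset.mem_insert.mp hx with rfl | hx
          · exact hσ.1 _ hx0σ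
          · exact hπ.1 _ (Finset.mem_of_mem_erase hx)
        · intro j
          rw [hπ1, Finset.filter_insert, Finset.filter_erase]
          by_cases hj : j0 = j
          · subst hj
            simp only [if_true]
            rw [hjob_empty]
            simp
          · simp only [hj, if_false]
            exact (Finset.card_le_card (Finset.erase_subset _ _)).trans (hπ.2.1 j)
        · intro k t
          rw [hπ1, Finset.filter_insert, Finset.filter_erase]
          by_cases hkt : (t0 : T) = t ∧ (k0 : K) = k
          · obtain ⟨rfl, rfl⟩ := hkt
            simp only [and_self, if_true]
            have hx1mem : x1 ∈ π.filter (fun x => x.2.1 = t0 ∧ x.2.2 = k0) :=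
              Finset.mem_filter.mpr ⟨hx1π, hx1t, hx1k⟩
            calc (insert (j0, t0, k0) ((π.filter _).erase x1)).card
                ≤ ((π.filter (fun x => x.2.1 = t0 ∧ x.2.2 = k0)).erase x1).card + 1 :=
                  Finset.card_insert_le _ _
              _ = n k0 t0 := by
                  rw [Finset.card_erase_of_mem hx1mem, hslot_eq]
                  have : 1 ≤ n k0 t0 := by
                    rw [← hslot_eq]
                    exact Finset.card_pos.mpr ⟨x1, hx1mem⟩
                  omega
          · simp only [hkt, if_false]
            exact (Finset.card_le_card (Finset.erase_subset _ _)).trans (hπ.2.2 k t)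
      have halloc : alloc π1 = alloc π := by
        funext k
        unfold alloc
        rw [hπ1, Finset.filter_insert, Finset.filter_erase]
        by_cases hk : (k0 : K) = k
        · subst hk
          simp only [if_true]
          have hx1mem : x1 ∈ π.filter (fun x => x.2.2 = k0) :=
            Finset.mem_filter.mpr ⟨hx1π, hx1k⟩
          have hx0nf : (j0, t0, k0) ∉ (π.filter (fun x => x.2.2 = k0)).erase x1 :=
            fun h => hx0π (Finset.mem_filter.mp (Finset.mem_of_mem_erase h)).1
          rw [Finset.card_insert_of_notMem hx0nf,
            Finset.card_erase_of_mem hx1mem]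
          have : 1 ≤ (π.filter (fun x => x.2.2 = k0)).card :=
            Finset.card_pos.mpr ⟨x1, hx1mem⟩
          omega
        · simp only [hk, if_false]
          congr 1
          apply Finset.erase_eq_of_notMem
          intro h
          exact hk ((Finset.mem_filter.mp h).2.symm ▸ hx1k ▸ rfl)
      -- the measure decreases
      have hmeas : (σ \ π1).card ≤ m := by
        have hsub : σ \ π1 ⊆ (σ \ π).erase (j0, t0, k0) := by
          intro y hy
          obtain ⟨hyσ, hyπ1⟩ := Finset.mem_sdiff.mp hy
          have hyne : y ≠ (j0, t0, k0) := fun h =>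
            hyπ1 (h ▸ Finset.mem_insert_self _ _)
          refine Finset.mem_erase.mpr ⟨hyne, Finset.mem_sdiff.mpr ⟨hyσ, ?_⟩⟩
          intro hyπ
          apply hyπ1
          rw [hπ1]
          apply Finset.mem_insert_of_mem
          refine Finset.mem_erase.mpr ⟨?_, hyπ⟩
          intro h
          exact hx1σ (h ▸ hyσ)
        have hx0mem : (j0, t0, k0) ∈ σ \ π := Finset.mem_sdiff.mpr ⟨hx0σ, hx0π⟩
        have := Finset.card_le_card hsub
        rw [Finset.card_erase_of_mem hx0mem] at this
        have hpos : 1 ≤ (σ \ π).card := Finset.card_pos.mpr ⟨_, hx0mem⟩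
        omega
      obtain ⟨π', hπ'feas, hπ'le, hπ'ne⟩ :=
        ih π1 σ hmeas hπ1feas hσ (by omega)
      exact ⟨π', hπ'feas, fun k => (halloc ▸ hπ'le k : _),
        fun h => hπ'ne (halloc.trans h)⟩

end Aux

/-- Pareto characterization of maximum allocations: a feasible
allocation is maximum iff no feasible allocation pointwise dominates its
allocation vector with a different allocation vector. -/
theorem maximum_iff_pareto {J T K : Type*}
    [Fintype J] [Fintype T] [Fintype K] [Nonempty J] [Nonempty T] [Nonempty K]
    [DecidableEq J] [DecidableEq T] [DecidableEq K]
    (b : J → T → K → Prop) (n : K → T → ℕ) (π : Finset (J × T × K))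
    (hfeas : Feasible b n π) :
    π.card = Zmax b n ↔
      ¬ ∃ π' : Finset (J × T × K), Feasible b n π' ∧
        (∀ k : K, alloc π k ≤ alloc π' k) ∧ alloc π ≠ alloc π' := by
  constructor
  · rintro hmax ⟨π', hπ'feas, hle, hne⟩
    have hklt : ∃ k, alloc π k < alloc π' k := by
      by_contra hc
      push_neg at hc
      exact hne (funext fun k => le_antisymm (hle k) (hc k))
    obtain ⟨k, hk⟩ := hklt
    have hsum : π.card < π'.card := by
      rw [card_eq_sum_alloc, card_eq_sum_alloc]
      exact Finset.sum_lt_sum (fun i _ => hle i) ⟨k, Finset.mem_univ k, hk⟩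
    have := card_le_Zmax b n hπ'feas
    omega
  · intro hno
    by_contra hne
    have hle := card_le_Zmax b n hfeas
    have hlt : π.card < Zmax b n := lt_of_le_of_ne hle hne
    obtain ⟨σ, hσfeas, hσcard⟩ := Zmax_mem b n
    obtain ⟨π', h1, h2, h3⟩ :=
      exchange b n ((σ \ π).card) π σ le_rfl hfeas hσfeas (by omega)
    exact hno ⟨π', h1, h2, h3⟩
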